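/- Let m ≥ 3 and let a_1,…,a_m ≥ 0 with Σ_{i=1}^m a_i = 1. Then Σ_{i=1}^m a_i (2 − 2a_i + log₂ a_i) ≤ 0, with the convention that the i-th summand is 0 when a_i = 0. -/

import Mathlib

lemma cubic_log_upper (v : ℝ) (hv : 0 ≤ v) :
    Real.log (1+v) ≤ v - v^2/2 + v^3/3 := by
  have hder : ∀ x : ℝ, 0 < x →
      HasDerivAt (fun x : ℝ => x - x^2/2 + x^3/3 - Real.log (1+x))
        (1 - x + x^2 - 1/(1+x)) x := by
    intro x hx
    have h1 : HasDerivAt (fun x : ℝ => Real.log (1+x)) (1/(1+x)) x := by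
      have := (Real.hasDerivAt_log (by linarith : (1:ℝ)+x ≠ 0)).comp x
        ((hasDerivAt_id x).const_add 1)
      simpa [Function.comp_def] using this
    have h2 : HasDerivAt (fun x : ℝ => x - x^2/2 + x^3/3) (1 - x + x^2) x := by
      have := (((hasDerivAt_id x).sub ((hasDerivAt_pow 2 x).div_const 2)).add
        ((hasDerivAt_pow 3 x).div_const 3))
      exact this.congr_deriv (by norm_num)
    exact h2.sub h1
  have key : MonotoneOn (fun x : ℝ => x - x^2/2 + x^3/3 - Real.log (1+x)) (Set.Ici 0) := by
    apply monotoneOn_of_deriv_nonneg (convex_Ici 0)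
    · apply ContinuousOn.sub (by fun_prop)
      intro x hx
      exact (Real.continuousAt_log (by simp at hx; linarith)).comp
        (by fun_prop) |>.continuousWithinAt
    · intro x hx
      simp only [interior_Ici, Set.mem_Ioi] at hx
      exact (hder x hx).differentiableAt.differentiableWithinAt
    · intro x hx
      simp only [interior_Ici, Set.mem_Ioi] at hx
      rw [(hder x hx).deriv]
      rw [sub_nonneg, div_le_iff₀ (by linarith)]
      nlinarith
  rcases eq_or_lt_of_le hv with h | h
  · simp [← h]
  · have := key (Set.self_mem_Ici) (Set.mem_Ici.mpr hv) hv
    simp at this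
    linarith

lemma cubic_log_lower (v : ℝ) (hv : 0 ≤ v) (hv1 : v < 1) :
    Real.log (1-v) ≤ -v - v^2/2 - v^3/3 := by
  have hder : ∀ x : ℝ, x ∈ Set.Ioo (0:ℝ) 1 →
      HasDerivAt (fun x : ℝ => -x - x^2/2 - x^3/3 - Real.log (1-x))
        (-1 - x - x^2 + 1/(1-x)) x := by
    intro x hx
    have h1 : HasDerivAt (fun x : ℝ => Real.log (1-x)) (-(1/(1-x))) x := by
      have := (Real.hasDerivAt_log (by intro h; have := hx.2; nlinarith [hx.2, sub_eq_zero.mp h] : (1:ℝ)-x ≠ 0)).comp x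
        (((hasDerivAt_id x).const_sub 1))
      simpa [Function.comp_def] using this
    have h2 : HasDerivAt (fun x : ℝ => -x - x^2/2 - x^3/3) (-1 - x - x^2) x := by
      have := (((hasDerivAt_id x).neg.sub ((hasDerivAt_pow 2 x).div_const 2)).sub
        ((hasDerivAt_pow 3 x).div_const 3))
      exact this.congr_deriv (by norm_num)
    have := h2.sub h1
    exact this.congr_deriv (by ring)
  have key : MonotoneOn (fun x : ℝ => -x - x^2/2 - x^3/3 - Real.log (1-x)) (Set.Ico 0 1) := by
    apply monotoneOn_of_deriv_nonneg (convex_Ico 0 1)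
    · apply ContinuousOn.sub (by fun_prop)
      intro x hx
      have : (1:ℝ) - x ≠ 0 := by
        simp only [Set.mem_Ico] at hx
        intro h; nlinarith [sub_eq_zero.mp h]
      exact ((Real.continuousAt_log this).comp (by fun_prop)).continuousWithinAt
    · intro x hx
      rw [interior_Ico] at hx
      exact (hder x hx).differentiableAt.differentiableWithinAt
    · intro x hx
      rw [interior_Ico] at hx
      rw [(hder x hx).deriv]
      obtain ⟨hx0, hx1⟩ := hx
      have h1x : (0:ℝ) < 1 - x := by linarith
      have : (1:ℝ) + x + x^2 ≤ 1/(1-x) := by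
        rw [le_div_iff₀ h1x]
        nlinarith
      linarith
  have := key (Set.mem_Ico.mpr ⟨le_refl 0, by norm_num⟩) (Set.mem_Ico.mpr ⟨hv, hv1⟩) hv
  simp at this
  linarith

open Finset

/-- g x = (2 - 2x) * log 2 + log x, the per-coordinate factor times log 2. -/
noncomputable def gfun (x : ℝ) : ℝ := (2 - 2*x) * Real.log 2 + Real.log x

lemma gfun_mono {x y : ℝ} (hx : 0 < x) (hxy : x ≤ y) (hy : y ≤ 1/2) :
    gfun x ≤ gfun y := by
  have hy0 : 0 < y := lt_of_lt_of_le hx hxy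
  have h1 : (y - x)/y ≤ Real.log y - Real.log x := by
    have h := Real.log_le_sub_one_of_pos (show 0 < x/y by positivity)
    rw [Real.log_div (ne_of_gt hx) (ne_of_gt hy0)] at h
    have h3 : (y - x)/y = 1 - x/y := by field_simp
    linarith [h3.le, h3.ge]
  have h2 : Real.log 2 ≤ 1 := by
    have := Real.log_le_sub_one_of_pos (by norm_num : (0:ℝ) < 2); linarith
  have h4 : 2*(y-x) ≤ (y - x)/y := by
    rw [le_div_iff₀ hy0]
    nlinarith
  unfold gfun
  nlinarith [h1, h4, mul_nonneg (sub_nonneg.mpr hxy) (sub_nonneg.mpr h2)]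

lemma f_nonpos_small {x : ℝ} (hx : 0 ≤ x) (hx2 : x ≤ 1/2) : x * gfun x ≤ 0 := by
  rcases eq_or_lt_of_le hx with h | h
  · simp [← h]
  · have := gfun_mono h hx2 (le_refl _)
    have hg : gfun (1/2) = 0 := by
      unfold gfun
      rw [show (1:ℝ)/2 = 2⁻¹ by norm_num, Real.log_inv]
      ring
    nlinarith

lemma binary_case {t : ℝ} (ht1 : 1/2 ≤ t) (ht2 : t ≤ 1) :
    t * gfun t + (1-t) * gfun (1-t) ≤ 0 := by
  obtain ⟨L, hLdef⟩ : ∃ L, L = Real.log 2 := ⟨_, rfl⟩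
  obtain ⟨s, hs⟩ : ∃ s, s = 1 - t := ⟨_, rfl⟩
  have hL : 0.6931471803 < L := by rw [hLdef]; exact Real.log_two_gt_d9
  have hL' : L < 0.6931471808 := by rw [hLdef]; exact Real.log_two_lt_d9
  have hs0 : 0 ≤ s := by rw [hs]; linarith
  have ht0 : 0 < t := by linarith
  have hexp : t * gfun t + (1-t) * gfun (1-t)
      = 4*L*t*s + t * Real.log t + s * Real.log s := by
    unfold gfun; rw [← hLdef, hs]; ring
  rw [hexp]
  by_cases hcase : t ≤ 17/20
  · -- middle region: Taylor expansion around 1/2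
    obtain ⟨v, hv⟩ : ∃ v, v = 2*t - 1 := ⟨_, rfl⟩
    have hv0 : 0 ≤ v := by rw [hv]; linarith
    have hv7 : v ≤ 7/10 := by rw [hv]; linarith
    have htv : t = (1+v)/2 := by rw [hv]; ring
    have hsv : s = (1-v)/2 := by rw [hs, hv]; ring
    have hlt : Real.log t ≤ v - v^2/2 + v^3/3 - L := by
      have := cubic_log_upper v hv0
      rw [htv, Real.log_div (by linarith) (by norm_num), ← hLdef]
      linarith
    have hls : Real.log s ≤ -v - v^2/2 - v^3/3 - L := by
      have := cubic_log_lower v hv0 (by linarith)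
      rw [hsv, Real.log_div (by intro h; nlinarith [sub_eq_zero.mp h]) (by norm_num),
        ← hLdef]
      linarith
    have hts : t * Real.log t ≤ t * (v - v^2/2 + v^3/3 - L) :=
      mul_le_mul_of_nonneg_left hlt (le_of_lt ht0)
    have hss : s * Real.log s ≤ s * (-v - v^2/2 - v^3/3 - L) :=
      mul_le_mul_of_nonneg_left hls hs0
    have heq : 4*L*t*s + t*(v - v^2/2 + v^3/3 - L) + s*(-v - v^2/2 - v^3/3 - L)
        = v^2*(1/2 - L) + v^4/3 := by rw [htv, hsv]; ring
    have hv2 : v^2 ≤ 49/100 := by nlinarith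
    have hlast : v^2*(1/2 - L) + v^4/3 ≤ 0 := by
      nlinarith [sq_nonneg v, mul_le_mul_of_nonneg_left hv2 (sq_nonneg v)]
    linarith [heq, hts, hss, hlast]
  · -- t ≥ 17/20, s ≤ 3/20
    push_neg at hcase
    have hsle : s ≤ 3/20 := by rw [hs]; linarith
    have h1 : t * Real.log t ≤ t * (t - 1) :=
      mul_le_mul_of_nonneg_left (Real.log_le_sub_one_of_pos ht0) (le_of_lt ht0)
    have h2 : s * Real.log s ≤ s * Real.log (3/20) := by
      rcases eq_or_lt_of_le hs0 with h | h
      · simp [← h]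
      · exact mul_le_mul_of_nonneg_left
          (Real.log_le_log h hsle) (le_of_lt h)
    have hkey : 4*L - 1 ≤ Real.log (20/3) := by
      have h16 : Real.log 16 = 4 * L := by
        rw [hLdef, show (16:ℝ) = 2^4 by norm_num, Real.log_pow]
        norm_num
      have hdiv : Real.log (20/3) = Real.log 16 - Real.log (12/5) := by
        rw [← Real.log_div (by norm_num) (by norm_num)]
        norm_num
      have h125 : Real.log (12/5) < 1 := by
        have he := Real.exp_one_gt_d9
        have : Real.log (12/5) < Real.log (Real.exp 1) :=
          Real.log_lt_log (by norm_num) (by linarith)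
        rwa [Real.log_exp] at this
      linarith
    have h3 : Real.log (3/20) = - Real.log (20/3) := by
      rw [← Real.log_inv]; norm_num
    have h4 : s * Real.log (3/20) ≤ s * (1 - 4*L) := by
      rw [h3]
      nlinarith [hkey]
    have heq2 : 4*L*t*s + t*(t - 1) + s*(1-4*L) = -(4*L-1)*s^2 := by
      rw [hs]; ring
    nlinarith [heq2, h1, h2, h4, sq_nonneg s]

theorem prob_vector_sum_g_nonpos
    (m : ℕ) (hm : 3 ≤ m) (a : Fin m → ℝ)
    (ha : ∀ i, 0 ≤ a i) (hsum : ∑ i, a i = 1) :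
    ∑ i, a i * (2 - 2 * a i + Real.logb 2 (a i)) ≤ 0 := by
  have hL : 0 < Real.log 2 := Real.log_pos (by norm_num)
  have hrw : ∑ i, a i * (2 - 2 * a i + Real.logb 2 (a i))
      = (∑ i, a i * gfun (a i)) / Real.log 2 := by
    rw [Finset.sum_div]
    apply Finset.sum_congr rfl
    intro i _
    unfold gfun
    rw [Real.logb]
    rw [eq_div_iff (ne_of_gt hL)]
    field_simp
  rw [hrw]
  apply div_nonpos_of_nonpos_of_nonneg _ (le_of_lt hL)
  -- main goal: ∑ a i * gfun (a i) ≤ 0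
  by_cases hbig : ∃ j, 1/2 < a j
  · obtain ⟨j, hj⟩ := hbig
    set t := a j with htdef
    set s := 1 - t with hsdef
    have ht1 : t ≤ 1 := by
      rw [← hsum]
      exact Finset.single_le_sum (fun i _ => ha i) (mem_univ j)
    have hsum' : ∑ i ∈ univ.erase j, a i = s := by
      have := Finset.add_sum_erase univ a (mem_univ j)
      rw [hsum] at this
      rw [hsdef]; linarith
    have hsle : s ≤ 1/2 := by rw [hsdef]; linarith
    have hterm : ∀ i ∈ univ.erase j, a i * gfun (a i) ≤ a i * gfun s := by
      intro i hi
      rcases eq_or_lt_of_le (ha i) with h | h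
      · rw [← h]; simp
      · have hile : a i ≤ s := by
          have h2 : a i ≤ ∑ k ∈ univ.erase j, a k :=
            Finset.single_le_sum (fun k _ => ha k) hi
          linarith [hsum', h2, hsum'.ge]
        exact mul_le_mul_of_nonneg_left (gfun_mono h hile hsle) (le_of_lt h)
    have hsplit : ∑ i, a i * gfun (a i)
        = t * gfun t + ∑ i ∈ univ.erase j, a i * gfun (a i) := by
      rw [← Finset.add_sum_erase univ (fun i => a i * gfun (a i)) (mem_univ j)]
    rw [hsplit]
    have h5 : ∑ i ∈ univ.erase j, a i * gfun (a i) ≤ s * gfun s := by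
      calc ∑ i ∈ univ.erase j, a i * gfun (a i)
          ≤ ∑ i ∈ univ.erase j, a i * gfun s := Finset.sum_le_sum hterm
        _ = s * gfun s := by rw [← Finset.sum_mul, hsum']
    have := binary_case (le_of_lt hj) ht1
    rw [← hsdef] at this
    linarith
  · push_neg at hbig
    apply Finset.sum_nonpos
    intro i _
    exact f_nonpos_small (ha i) (hbig i)
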